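/- Let ε ∈ ℝ and let Φ_{1,ε} be the rational map Φ_{1,ε}(x,y) = ( (−2εx² + (1−ε²)x − 2εy² − 2εy)/D₁(x,y), (−2ε²x² + 2εx − 2ε²y² + (1−ε²)y)/D₁(x,y) ), D₁(x,y) = 4ε²x² + 4ε²y² + 4ε²y + ε² − 4εx + 1. Let X₁: ℝ² → ℝ² be the vector field X₁(x,y) = (−y + x² − y², x(1+2y)) of the isochronous system S₁. Then X₁ is a Lie symmetry of Φ_{1,ε}: for every (x,y) with D₁(x,y) ≠ 0, X₁(Φ_{1,ε}(x,y)) = JΦ_{1,ε}(x,y) · X₁(x,y), where JΦ_{1,ε}(x,y) is the Jacobian matrix of Φ_{1,ε} at (x,y). -/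

import Mathlib

/-- Denominator of the Kahan–Hirota–Kimura map `Φ_{1,ε}` of the isochronous
quadratic system `S₁`: `ẋ = -y + x² - y²`, `ẏ = x(1+2y)`. -/
noncomputable def D1 (ε x y : ℝ) : ℝ :=
  4 * ε ^ 2 * x ^ 2 + 4 * ε ^ 2 * y ^ 2 + 4 * ε ^ 2 * y + ε ^ 2 - 4 * ε * x + 1

/-- The Kahan–Hirota–Kimura map `Φ_{1,ε}` of the isochronous quadratic system `S₁`. -/
noncomputable def Phi1 (ε : ℝ) (q : ℝ × ℝ) : ℝ × ℝ :=
  ((-2 * ε * q.1 ^ 2 + (1 - ε ^ 2) * q.1 - 2 * ε * q.2 ^ 2 - 2 * ε * q.2) / D1 ε q.1 q.2,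
   (-2 * ε ^ 2 * q.1 ^ 2 + 2 * ε * q.1 - 2 * ε ^ 2 * q.2 ^ 2 + (1 - ε ^ 2) * q.2) /
      D1 ε q.1 q.2)

/-- The isochronous quadratic vector field `S₁`: `X₁(x,y) = (-y + x² - y², x(1+2y))`. -/
noncomputable def X1 (q : ℝ × ℝ) : ℝ × ℝ := (-q.2 + q.1 ^ 2 - q.2 ^ 2, q.1 * (1 + 2 * q.2))

noncomputable def Lmap (a b : ℝ) : ℝ × ℝ →L[ℝ] ℝ :=
  a • ContinuousLinearMap.fst ℝ ℝ ℝ + b • ContinuousLinearMap.snd ℝ ℝ ℝ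

@[simp] lemma Lmap_apply (a b : ℝ) (v : ℝ × ℝ) : Lmap a b v = a * v.1 + b * v.2 := by
  simp [Lmap, smul_eq_mul]

/-- quadratic helper -/
noncomputable def Q (c0 c1 c2 c3 c4 : ℝ) (p : ℝ × ℝ) : ℝ :=
  c0 + c1 * p.1 + c2 * p.2 + c3 * (p.1 * p.1) + c4 * (p.2 * p.2)

lemma hasFDerivAt_Q (c0 c1 c2 c3 c4 : ℝ) (q : ℝ × ℝ) :
    HasFDerivAt (Q c0 c1 c2 c3 c4)
      (Lmap (c1 + 2 * c3 * q.1) (c2 + 2 * c4 * q.2)) q := by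
  have h1 : HasFDerivAt (fun p : ℝ × ℝ => p.1) (ContinuousLinearMap.fst ℝ ℝ ℝ) q :=
    hasFDerivAt_fst
  have h2 : HasFDerivAt (fun p : ℝ × ℝ => p.2) (ContinuousLinearMap.snd ℝ ℝ ℝ) q :=
    hasFDerivAt_snd
  have h := (((((hasFDerivAt_const c0 q).add (h1.const_mul c1)).add
      (h2.const_mul c2)).add ((h1.mul h1).const_mul c3)).add ((h2.mul h2).const_mul c4))
  refine (h.congr_fderiv ?_).congr_of_eventuallyEq (Filter.Eventually.of_forall fun p => ?_)
  · ext <;> simp [Lmap, smul_eq_mul] <;> ring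
  · rfl

/-- The vector field `X₁` of the system `S₁` is a Lie symmetry of its KHK map `Φ_{1,ε}`:
`X₁(Φ_{1,ε}(p)) = JΦ_{1,ε}(p)·X₁(p)` wherever `D₁ ≠ 0`. -/
theorem stmt_11 (ε : ℝ) (q : ℝ × ℝ) (hD : D1 ε q.1 q.2 ≠ 0) :
    X1 (Phi1 ε q) = fderiv ℝ (Phi1 ε) q (X1 q) := by
  obtain ⟨x, y⟩ := q
  simp only [D1] at hD
  -- coefficients
  have hQD : (fun p : ℝ × ℝ => Q (ε ^ 2 + 1) (-4 * ε) (4 * ε ^ 2) (4 * ε ^ 2) (4 * ε ^ 2) p)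
      = fun p : ℝ × ℝ => D1 ε p.1 p.2 := by
    funext p; simp [Q, D1]; ring
  have hPhi : Phi1 ε = fun p : ℝ × ℝ =>
      (Q 0 (1 - ε ^ 2) (-2 * ε) (-2 * ε) (-2 * ε) p *
        (Q (ε ^ 2 + 1) (-4 * ε) (4 * ε ^ 2) (4 * ε ^ 2) (4 * ε ^ 2) p)⁻¹,
       Q 0 (2 * ε) (1 - ε ^ 2) (-2 * ε ^ 2) (-2 * ε ^ 2) p *
        (Q (ε ^ 2 + 1) (-4 * ε) (4 * ε ^ 2) (4 * ε ^ 2) (4 * ε ^ 2) p)⁻¹) := by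
    funext p; simp [Phi1, Q, D1, div_eq_mul_inv]; constructor <;> ring
  set A := fun p : ℝ × ℝ => Q 0 (1 - ε ^ 2) (-2 * ε) (-2 * ε) (-2 * ε) p with hA
  set B := fun p : ℝ × ℝ => Q 0 (2 * ε) (1 - ε ^ 2) (-2 * ε ^ 2) (-2 * ε ^ 2) p with hB
  set Dd := fun p : ℝ × ℝ => Q (ε ^ 2 + 1) (-4 * ε) (4 * ε ^ 2) (4 * ε ^ 2) (4 * ε ^ 2) p
    with hDd
  have hDq : Dd (x, y) ≠ 0 := by
    intro h; apply hD; rw [← h]; simp [hDd, Q]; ring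
  have hAd := hasFDerivAt_Q 0 (1 - ε ^ 2) (-2 * ε) (-2 * ε) (-2 * ε) (x, y)
  have hBd := hasFDerivAt_Q 0 (2 * ε) (1 - ε ^ 2) (-2 * ε ^ 2) (-2 * ε ^ 2) (x, y)
  have hDdd := hasFDerivAt_Q (ε ^ 2 + 1) (-4 * ε) (4 * ε ^ 2) (4 * ε ^ 2) (4 * ε ^ 2) (x, y)
  have hinv : HasFDerivAt (fun p => (Dd p)⁻¹)
      ((-(Dd (x, y) ^ 2)⁻¹) • Lmap (-4 * ε + 2 * (4 * ε ^ 2) * x)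
        (4 * ε ^ 2 + 2 * (4 * ε ^ 2) * y)) (x, y) :=
    (hasDerivAt_inv hDq).comp_hasFDerivAt (x, y) hDdd
  have h1 : HasFDerivAt (fun p => A p * (Dd p)⁻¹)
      (A (x, y) • ((-(Dd (x, y) ^ 2)⁻¹) • Lmap (-4 * ε + 2 * (4 * ε ^ 2) * x)
          (4 * ε ^ 2 + 2 * (4 * ε ^ 2) * y)) +
        (Dd (x, y))⁻¹ • Lmap (1 - ε ^ 2 + 2 * (-2 * ε) * x) (-2 * ε + 2 * (-2 * ε) * y))
      (x, y) := hAd.mul hinv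
  have h2 : HasFDerivAt (fun p => B p * (Dd p)⁻¹)
      (B (x, y) • ((-(Dd (x, y) ^ 2)⁻¹) • Lmap (-4 * ε + 2 * (4 * ε ^ 2) * x)
          (4 * ε ^ 2 + 2 * (4 * ε ^ 2) * y)) +
        (Dd (x, y))⁻¹ • Lmap (2 * ε + 2 * (-2 * ε ^ 2) * x) (1 - ε ^ 2 + 2 * (-2 * ε ^ 2) * y))
      (x, y) := hBd.mul hinv
  have hPhd := h1.prodMk h2
  rw [← hPhi] at hPhd
  rw [hPhd.fderiv]
  have hDval : Dd (x, y) = D1 ε x y := by simp [hDd, Q, D1]; ring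
  have hAval : A (x, y) = -2 * ε * x ^ 2 + (1 - ε ^ 2) * x - 2 * ε * y ^ 2 - 2 * ε * y := by
    simp [hA, Q]; ring
  have hBval : B (x, y) = -2 * ε ^ 2 * x ^ 2 + 2 * ε * x - 2 * ε ^ 2 * y ^ 2 + (1 - ε ^ 2) * y := by
    simp [hB, Q]; ring
  simp only [X1, Phi1, ContinuousLinearMap.prod_apply, ContinuousLinearMap.add_apply,
    ContinuousLinearMap.smul_apply, Lmap_apply, hDval, hAval, hBval, smul_eq_mul]
  have hD' : D1 ε x y ≠ 0 := hD
  rw [Prod.mk.injEq]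
  constructor <;> (field_simp; simp only [D1]; ring)
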